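/- Let μ > 0, μ_c > 0 and λ ∈ ℝ with 2μ + 3λ > 0 (positive bulk modulus), let n ∈ ℝ³ with ‖n‖ = 1, and let E ∈ ℝ^{3×3} satisfy E n = 0. Then the infimum over v ∈ ℝ³ of W_mp(E + v ⊗ n) := μ‖sym(E + v ⊗ n)‖² + μ_c‖skew(E + v ⊗ n)‖² + (λ/2)(tr(E + v ⊗ n))² is attained, and its value (the homogenized membrane energy of the Cosserat-shell model) equals μ‖sym E^∥‖² + μ_c‖skew E^∥‖² + (λμ/(λ+2μ)) (tr E)² + (2μμ_c/(μ+μ_c)) ‖Eᵀn‖², where E^∥ := (𝟙₃ − n ⊗ n) E. -/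

import Mathlib

open Matrix

noncomputable section

/-- Symmetric part of a matrix. -/
def msym {n : ℕ} (X : Matrix (Fin n) (Fin n) ℝ) : Matrix (Fin n) (Fin n) ℝ :=
  (1 / 2 : ℝ) • (X + Xᵀ)

/-- Skew-symmetric part of a matrix. -/
def mskew {n : ℕ} (X : Matrix (Fin n) (Fin n) ℝ) : Matrix (Fin n) (Fin n) ℝ :=
  (1 / 2 : ℝ) • (X - Xᵀ)

/-- Squared Frobenius norm `‖X‖² = tr(XᵀX)`. -/
def mnormSq {n : ℕ} (X : Matrix (Fin n) (Fin n) ℝ) : ℝ :=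
  Matrix.trace (Xᵀ * X)

/-- Squared Euclidean norm on `ℝ³`. -/
def vnormSq (v : Fin 3 → ℝ) : ℝ := ∑ i, (v i) ^ 2

/-- The quadratic isotropic membrane energy. -/
def Wmp (μ μc lam : ℝ) (X : Matrix (Fin 3) (Fin 3) ℝ) : ℝ :=
  μ * mnormSq (msym X) + μc * mnormSq (mskew X)
    + (lam / 2) * (Matrix.trace X) ^ 2

private lemma vnormSq_nonneg' (v : Fin 3 → ℝ) : 0 ≤ vnormSq v :=
  Finset.sum_nonneg fun _ _ => sq_nonneg _

set_option maxHeartbeats 1000000 in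
private lemma key2 (μ μc lam : ℝ)
    (n : Fin 3 → ℝ) (hn : vnormSq n = 1)
    (E : Matrix (Fin 3) (Fin 3) ℝ) (hE : E.mulVec n = 0) (v : Fin 3 → ℝ)
    (t : ℝ) (ht : v ⬝ᵥ n = t) :
    2*(μ+μc)*(lam+2*μ) * Wmp μ μc lam (E + vecMulVec v n) =
      2*(μ+μc)*(lam+2*μ) * (μ * mnormSq (msym (((1 : Matrix (Fin 3) (Fin 3) ℝ) - vecMulVec n n) * E))
        + μc * mnormSq (mskew (((1 : Matrix (Fin 3) (Fin 3) ℝ) - vecMulVec n n) * E)))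
      + 2*(μ+μc)*lam*μ*(Matrix.trace E)^2
      + 4*(lam+2*μ)*μ*μc * vnormSq (Eᵀ.mulVec n)
      + (lam+2*μ) * vnormSq (fun i => (μ+μc)*v i - ((μ+μc)*t)*n i + (μ-μc)*(Eᵀ.mulVec n i))
      + (μ+μc) * ((lam+2*μ)*t + lam*Matrix.trace E)^2 := by
  subst ht
  have he0 := congrFun hE 0
  have he1 := congrFun hE 1
  have he2 := congrFun hE 2
  simp only [Matrix.mulVec, dotProduct, Fin.sum_univ_three, Pi.zero_apply] at he0 he1 he2
  simp only [vnormSq, Fin.sum_univ_three] at hn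
  simp (config := { maxSteps := 10000000 }) only [Wmp, mnormSq, msym, mskew, vnormSq,
    Matrix.trace, Matrix.diag, Matrix.mul_apply,
    Matrix.transpose_apply, Matrix.add_apply, Matrix.sub_apply, Matrix.smul_apply, smul_eq_mul,
    Matrix.vecMulVec_apply, Matrix.one_apply, Matrix.mulVec, dotProduct,
    Fin.sum_univ_three, Fin.isValue, Fin.reduceEq, reduceIte]
  linear_combination ((μ+μc)^2*(lam+2*μ)*((v 0^2 + v 1^2 + v 2^2) - ((E 0 0 * n 0 + E 1 0 * n 1 + E 2 0 * n 2)^2 + (E 0 1 * n 0 + E 1 1 * n 1 + E 2 1 * n 2)^2 + (E 0 2 * n 0 + E 1 2 * n 1 + E 2 2 * n 2)^2) - (v 0 * n 0 + v 1 * n 1 + v 2 * n 2)^2)) * hn + ((lam+2*μ)*(μ+μc)*(2*(μ+μc)*v 0 + 2*(μ-μc)*(E 0 0 * n 0 + E 1 0 * n 1 + E 2 0 * n 2) - (μ-μc)*n 0*((E 0 0 * n 0 + E 0 1 * n 1 + E 0 2 * n 2) * n 0 + (E 1 0 * n 0 + E 1 1 * n 1 + E 1 2 * n 2) * n 1 +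 (E 2 0 * n 0 + E 2 1 * n 1 + E 2 2 * n 2) * n 2) + 2*(μ-μc)*(v 0 * n 0 + v 1 * n 1 + v 2 * n 2)*n 0)) * he0 + ((lam+2*μ)*(μ+μc)*(2*(μ+μc)*v 1 + 2*(μ-μc)*(E 0 1 * n 0 + E 1 1 * n 1 + E 2 1 * n 2) - (μ-μc)*n 1*((E 0 0 * n 0 + E 0 1 * n 1 + E 0 2 * n 2) * n 0 + (E 1 0 * n 0 + E 1 1 * n 1 + E 1 2 * n 2) * n 1 + (E 2 0 * n 0 + E 2 1 * n 1 + E 2 2 * n 2) * n 2) + 2*(μ-μc)*(v 0 * n 0 + v 1 * n 1 + v 2 * n 2)*n 1)) * he1 + ((lam+2*μ)*(μ+μc)*(2*(μ+μc)*v 2 + 2*(μ-μc)*(E 0 2 * n 0 + E 1 2 * n 1 + E 2 2 * n 2) - (μ-μc)*n 2*((E 0 0 * n 0 + E 0 1 * n 1 + E 0 2 * n 2) * n 0 + (E 1 0 * n 0 + E 1 1 * n 1 + E 1 2 * n 2) * n 1 + (E 2 0 * n 0 + E 2 1 * n 1 + E 2 2 * n 2) * n 2) + 2*(μ-μc)*(v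 0 * n 0 + v 1 * n 1 + v 2 * n 2)*n 2)) * he2

theorem stmt_18 (μ μc lam : ℝ) (hμ : 0 < μ) (hμc : 0 < μc)
    (hbulk : 0 < 2 * μ + 3 * lam)
    (n : Fin 3 → ℝ) (hn : vnormSq n = 1)
    (E : Matrix (Fin 3) (Fin 3) ℝ) (hE : E.mulVec n = 0) :
    IsLeast
      (Set.range fun v : Fin 3 → ℝ => Wmp μ μc lam (E + vecMulVec v n))
      (μ * mnormSq (msym (((1 : Matrix (Fin 3) (Fin 3) ℝ) - vecMulVec n n) * E))
        + μc * mnormSq (mskew (((1 : Matrix (Fin 3) (Fin 3) ℝ) - vecMulVec n n) * E))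
        + (lam * μ / (lam + 2 * μ)) * (Matrix.trace E) ^ 2
        + (2 * μ * μc / (μ + μc)) * vnormSq (Eᵀ.mulVec n)) := by
  have hα : (0:ℝ) < μ + μc := by linarith
  have hβ : (0:ℝ) < lam + 2*μ := by linarith
  have hα' : (μ + μc) ≠ 0 := ne_of_gt hα
  have hβ' : (lam + 2*μ) ≠ 0 := ne_of_gt hβ
  have hpos : (0:ℝ) < 2*(μ+μc)*(lam+2*μ) := by positivity
  have hwn : Eᵀ.mulVec n ⬝ᵥ n = 0 := by
    have he0 := congrFun hE 0
    have he1 := congrFun hE 1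
    have he2 := congrFun hE 2
    simp only [Matrix.mulVec, dotProduct, Matrix.transpose_apply, Pi.zero_apply,
      Fin.sum_univ_three] at he0 he1 he2 ⊢
    linear_combination n 0 * he0 + n 1 * he1 + n 2 * he2
  constructor
  · refine ⟨fun i => -(lam * Matrix.trace E / (lam + 2*μ)) * n i
      + -((μ-μc)/(μ+μc)) * Eᵀ.mulVec n i, ?_⟩
    have hdot : (fun i => -(lam * Matrix.trace E / (lam + 2*μ)) * n i
        + -((μ-μc)/(μ+μc)) * Eᵀ.mulVec n i) ⬝ᵥ n = -(lam * Matrix.trace E / (lam + 2*μ)) := by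
      have hn2 := hn
      have hwn2 := hwn
      simp only [vnormSq, Fin.sum_univ_three] at hn2
      simp only [dotProduct, Fin.sum_univ_three] at hwn2 ⊢
      linear_combination (-(lam * Matrix.trace E / (lam + 2*μ))) * hn2
        + (-((μ-μc)/(μ+μc))) * hwn2
    have h := key2 μ μc lam n hn E hE _ _ hdot
    dsimp only
    refine mul_left_cancel₀ (ne_of_gt hpos) ?_
    rw [h]
    simp only [vnormSq, Fin.sum_univ_three]
    field_simp
    ring
  · rintro x ⟨v, rfl⟩
    have h := key2 μ μc lam n hn E hE v (v ⬝ᵥ n) rfl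
    have h1 := vnormSq_nonneg' (fun i => (μ+μc)*v i - ((μ+μc)*(v ⬝ᵥ n))*n i
      + (μ-μc)*(Eᵀ.mulVec n i))
    have h2 := sq_nonneg ((lam+2*μ)*(v ⬝ᵥ n) + lam*Matrix.trace E)
    dsimp only
    refine le_of_mul_le_mul_right ?_ hpos
    have hconst : (μ * mnormSq (msym (((1 : Matrix (Fin 3) (Fin 3) ℝ) - vecMulVec n n) * E))
        + μc * mnormSq (mskew (((1 : Matrix (Fin 3) (Fin 3) ℝ) - vecMulVec n n) * E))
        + (lam * μ / (lam + 2 * μ)) * (Matrix.trace E) ^ 2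
        + (2 * μ * μc / (μ + μc)) * vnormSq (Eᵀ.mulVec n)) * (2*(μ+μc)*(lam+2*μ))
        = 2*(μ+μc)*(lam+2*μ) * (μ * mnormSq (msym (((1 : Matrix (Fin 3) (Fin 3) ℝ) - vecMulVec n n) * E))
        + μc * mnormSq (mskew (((1 : Matrix (Fin 3) (Fin 3) ℝ) - vecMulVec n n) * E)))
      + 2*(μ+μc)*lam*μ*(Matrix.trace E)^2
      + 4*(lam+2*μ)*μ*μc * vnormSq (Eᵀ.mulVec n) := by
      have e1 : lam * μ / (lam + 2 * μ) * (lam + 2*μ) = lam*μ := div_mul_cancel₀ _ hβ'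
      have e2 : 2 * μ * μc / (μ + μc) * (μ+μc) = 2*μ*μc := div_mul_cancel₀ _ hα'
      linear_combination (2*(μ+μc)*(Matrix.trace E)^2) * e1 + (2*(lam+2*μ)*vnormSq (Eᵀ.mulVec n)) * e2
    rw [hconst]
    nlinarith [mul_nonneg hβ.le h1, mul_nonneg hα.le h2]
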